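/- If the syntactic equivalence ∼_L of a pomset language L ⊆ SP is a congruence of finite index, then L is recognizable by a pomset recognizer. -/
import Mathlib


/-- Syntactic terms for series-parallel pomsets over alphabet `σ`. -/
inductive SPTerm (σ : Type) : Type
  | eps : SPTerm σ
  | letter (a : σ) : SPTerm σ
  | seq (t u : SPTerm σ) : SPTerm σ
  | par (t u : SPTerm σ) : SPTerm σ

/-- Semantic equality of terms: the congruence generated by associativity of
both compositions, commutativity of `par`, and neutrality of `eps`.
By freeness of SP in the variety of bimonoids, two terms denote the same
series-parallel pomset iff they are related by this relation. -/
inductive SPEquiv {σ : Type} : SPTerm σ → SPTerm σ → Prop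
  | refl (t) : SPEquiv t t
  | symm {t u} : SPEquiv t u → SPEquiv u t
  | trans {t u v} : SPEquiv t u → SPEquiv u v → SPEquiv t v
  | seq_congr {t t' u u'} : SPEquiv t t' → SPEquiv u u' → SPEquiv (.seq t u) (.seq t' u')
  | par_congr {t t' u u'} : SPEquiv t t' → SPEquiv u u' → SPEquiv (.par t u) (.par t' u')
  | seq_assoc (t u v) : SPEquiv (.seq (.seq t u) v) (.seq t (.seq u v))
  | par_assoc (t u v) : SPEquiv (.par (.par t u) v) (.par t (.par u v))
  | par_comm (t u) : SPEquiv (.par t u) (.par u t)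
  | seq_eps_left (t) : SPEquiv (.seq .eps t) t
  | seq_eps_right (t) : SPEquiv (.seq t .eps) t
  | par_eps (t) : SPEquiv (.par t .eps) t

def SPSetoid (σ : Type) : Setoid (SPTerm σ) :=
  ⟨SPEquiv, ⟨SPEquiv.refl, SPEquiv.symm, SPEquiv.trans⟩⟩

/-- Series-parallel pomsets over `σ`. -/
def SP (σ : Type) : Type := Quotient (SPSetoid σ)

def SP.mk {σ : Type} (t : SPTerm σ) : SP σ := Quotient.mk (SPSetoid σ) t

/-- The empty pomset ε. -/
def SP.eps {σ : Type} : SP σ := SP.mk .eps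

/-- The singleton pomset labelled by `a`. -/
def SP.letter {σ : Type} (a : σ) : SP σ := SP.mk (.letter a)

/-- Sequential composition of series-parallel pomsets. -/
def SP.seq {σ : Type} : SP σ → SP σ → SP σ :=
  Quotient.map₂ SPTerm.seq (fun _ _ h _ _ h' => SPEquiv.seq_congr h h')

/-- Parallel composition of series-parallel pomsets. -/
def SP.par {σ : Type} : SP σ → SP σ → SP σ :=
  Quotient.map₂ SPTerm.par (fun _ _ h _ _ h' => SPEquiv.par_congr h h')

/-- A bimonoid structure on `M`: two associative operations, `par`
additionally commutative, sharing the neutral element `one`. -/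
structure BimonoidStr (M : Type) where
  seq : M → M → M
  par : M → M → M
  one : M
  seq_assoc : ∀ a b c, seq (seq a b) c = seq a (seq b c)
  par_assoc : ∀ a b c, par (par a b) c = par a (par b c)
  par_comm : ∀ a b, par a b = par b a
  seq_one : ∀ a, seq a one = a
  one_seq : ∀ a, seq one a = a
  par_one : ∀ a, par a one = a

/-- Evaluation of a term in a bimonoid, extending `i : σ → M`. -/
def termEval {σ M : Type} (str : BimonoidStr M) (i : σ → M) : SPTerm σ → M
  | .eps => str.one
  | .letter a => i a
  | .seq t u => str.seq (termEval str i t) (termEval str i u)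
  | .par t u => str.par (termEval str i t) (termEval str i u)

theorem termEval_congr {σ M : Type} (str : BimonoidStr M) (i : σ → M)
    {t u : SPTerm σ} (h : SPEquiv t u) : termEval str i t = termEval str i u := by
  induction h with
  | refl => rfl
  | symm _ ih => exact ih.symm
  | trans _ _ ih1 ih2 => exact ih1.trans ih2
  | seq_congr _ _ ih1 ih2 => simp only [termEval, ih1, ih2]
  | par_congr _ _ ih1 ih2 => simp only [termEval, ih1, ih2]
  | seq_assoc t u v => simp only [termEval]; exact str.seq_assoc _ _ _
  | par_assoc t u v => simp only [termEval]; exact str.par_assoc _ _ _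
  | par_comm t u => simp only [termEval]; exact str.par_comm _ _
  | seq_eps_left t => simp only [termEval]; exact str.one_seq _
  | seq_eps_right t => simp only [termEval]; exact str.seq_one _
  | par_eps t => simp only [termEval]; exact str.par_one _

/-- A pomset recognizer with state set `M`: a finite bimonoid together with
an interpretation of letters and a set of accepting states. -/
structure Recognizer (σ M : Type) where
  fin : Finite M
  str : BimonoidStr M
  i : σ → M
  F : Set M

/-- The unique homomorphic extension of `R.i` to series-parallel pomsets. -/
def Recognizer.eval {σ M : Type} (R : Recognizer σ M) : SP σ → M :=
  Quotient.lift (termEval R.str R.i) (fun _ _ h => termEval_congr R.str R.i h)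

/-- `R` accepts the pomset `w`. -/
def Recognizer.accepts {σ M : Type} (R : Recognizer σ M) (w : SP σ) : Prop :=
  R.eval w ∈ R.F

/-- The language of a recognizer. -/
def Recognizer.lang {σ M : Type} (R : Recognizer σ M) : Set (SP σ) :=
  {w | R.accepts w}

/-- 1-contexts: series-parallel pomsets with exactly one placeholder □. -/
inductive Ctx (σ : Type) : Type
  | hole : Ctx σ
  | seqL (c : Ctx σ) (w : SP σ) : Ctx σ
  | seqR (w : SP σ) (c : Ctx σ) : Ctx σ
  | parL (c : Ctx σ) (w : SP σ) : Ctx σ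
  | parR (w : SP σ) (c : Ctx σ) : Ctx σ

/-- Substitution of a pomset for the placeholder of a context: `c[z]`. -/
def Ctx.app {σ : Type} : Ctx σ → SP σ → SP σ
  | .hole, z => z
  | .seqL c w, z => SP.seq (c.app z) w
  | .seqR w c, z => SP.seq w (c.app z)
  | .parL c w, z => SP.par (c.app z) w
  | .parR w c, z => SP.par w (c.app z)

/-- Syntactic equivalence of a pomset language: `u ∼_L v` iff no 1-context
separates `u` and `v` with respect to membership in `L`. -/
def SynEq {σ : Type} (L : Set (SP σ)) (u v : SP σ) : Prop :=
  ∀ c : Ctx σ, c.app u ∈ L ↔ c.app v ∈ L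

def synSetoid {σ : Type} (L : Set (SP σ)) : Setoid (SP σ) :=
  ⟨SynEq L, ⟨fun _ _ => Iff.rfl, fun h c => (h c).symm, fun h1 h2 c => (h1 c).trans (h2 c)⟩⟩

/-- if `∼_L` is a congruence of finite index then `L` is
recognizable by a pomset recognizer. -/
theorem syn_congruence_finite_recognizable {σ : Type} (L : Set (SP σ))
    (hcong : ∀ u u' v v', SynEq L u u' → SynEq L v v' →
      SynEq L (SP.seq u v) (SP.seq u' v') ∧ SynEq L (SP.par u v) (SP.par u' v'))
    (hfin : Finite (Quotient (synSetoid L))) :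
    ∃ (M : Type) (R : Recognizer σ M), ∀ w, w ∈ L ↔ R.accepts w := by
  classical
  -- SP-level laws
  have seq_assoc : ∀ a b c : SP σ, SP.seq (SP.seq a b) c = SP.seq a (SP.seq b c) := by
    intro a b c
    induction a using Quotient.ind; induction b using Quotient.ind; induction c using Quotient.ind
    exact Quotient.sound (SPEquiv.seq_assoc _ _ _)
  have par_assoc : ∀ a b c : SP σ, SP.par (SP.par a b) c = SP.par a (SP.par b c) := by
    intro a b c
    induction a using Quotient.ind; induction b using Quotient.ind; induction c using Quotient.ind
    exact Quotient.sound (SPEquiv.par_assoc _ _ _)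
  have par_comm : ∀ a b : SP σ, SP.par a b = SP.par b a := by
    intro a b
    induction a using Quotient.ind; induction b using Quotient.ind
    exact Quotient.sound (SPEquiv.par_comm _ _)
  have seq_one : ∀ a : SP σ, SP.seq a SP.eps = a := by
    intro a; induction a using Quotient.ind
    exact Quotient.sound (SPEquiv.seq_eps_right _)
  have one_seq : ∀ a : SP σ, SP.seq SP.eps a = a := by
    intro a; induction a using Quotient.ind
    exact Quotient.sound (SPEquiv.seq_eps_left _)
  have par_one : ∀ a : SP σ, SP.par a SP.eps = a := by
    intro a; induction a using Quotient.ind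
    exact Quotient.sound (SPEquiv.par_eps _)
  let Q := Quotient (synSetoid L)
  let mk : SP σ → Q := Quotient.mk (synSetoid L)
  let qseq : Q → Q → Q := Quotient.map₂ SP.seq
    (fun _ _ h _ _ h' => (hcong _ _ _ _ h h').1)
  let qpar : Q → Q → Q := Quotient.map₂ SP.par
    (fun _ _ h _ _ h' => (hcong _ _ _ _ h h').2)
  have hmkseq : ∀ u v, qseq (mk u) (mk v) = mk (SP.seq u v) := fun _ _ => rfl
  have hmkpar : ∀ u v, qpar (mk u) (mk v) = mk (SP.par u v) := fun _ _ => rfl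
  let str : BimonoidStr Q :=
    { seq := qseq
      par := qpar
      one := mk SP.eps
      seq_assoc := by
        intro a b c
        induction a using Quotient.ind; induction b using Quotient.ind
        induction c using Quotient.ind
        show mk _ = mk _
        rw [seq_assoc]
      par_assoc := by
        intro a b c
        induction a using Quotient.ind; induction b using Quotient.ind
        induction c using Quotient.ind
        show mk _ = mk _
        rw [par_assoc]
      par_comm := by
        intro a b
        induction a using Quotient.ind; induction b using Quotient.ind
        show mk _ = mk _
        rw [par_comm]
      seq_one := by
        intro a; induction a using Quotient.ind
        show mk _ = mk _; rw [seq_one]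
      one_seq := by
        intro a; induction a using Quotient.ind
        show mk _ = mk _; rw [one_seq]
      par_one := by
        intro a; induction a using Quotient.ind
        show mk _ = mk _; rw [par_one] }
  let R : Recognizer σ Q :=
    { fin := hfin
      str := str
      i := fun a => mk (SP.letter a)
      F := mk '' L }
  have heval : ∀ t : SPTerm σ, termEval str R.i t = mk (SP.mk t) := by
    intro t
    induction t with
    | eps => rfl
    | letter a => rfl
    | seq t u iht ihu =>
        show qseq (termEval str R.i t) (termEval str R.i u) = _
        rw [iht, ihu]; rfl
    | par t u iht ihu =>
        show qpar (termEval str R.i t) (termEval str R.i u) = _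
        rw [iht, ihu]; rfl
  have hevalw : ∀ w : SP σ, R.eval w = mk w := by
    intro w; induction w using Quotient.ind with
    | _ t => exact heval t
  refine ⟨Q, R, fun w => ?_⟩
  constructor
  · intro hw
    show R.eval w ∈ R.F
    rw [hevalw]
    exact ⟨w, hw, rfl⟩
  · intro hw
    have : R.eval w ∈ R.F := hw
    rw [hevalw] at this
    obtain ⟨v, hv, hvw⟩ := this
    have hsyn : SynEq L v w := Quotient.exact hvw
    exact (hsyn Ctx.hole).mp hv
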